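/- arXiv:math/0406545 — 2 statements merged into one kernel-verified Lean document; each statement's English description precedes it below -/
import Mathlib

section
/- Let Γ and Γ' = μ_k(Γ) be mutation-equivalent simply-laced diagrams (all edge weights 1). Then the underlying undirected graph of Γ' can be obtained from the underlying undirected graph of Γ by a sequence of basic moves; specifically, if c₁, …, c_r are the vertices with a weight-1 directed edge pointing toward k, then the underlying graph of μ_k(Γ) equals φ_{c_r,k} ∘ ⋯ ∘ φ_{c₁,k} applied to the underlying graph of Γ. -/
open Finset

/-! A diagram on a vertex type `V` is encoded by a weight function `w : V → V → ℕ`: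
`w i j` is the weight of the directed edge from `i` to `j` (`0` if there is no such
edge).  A genuine diagram is loopless and has at most one direction between any two
vertices, and the product of the weights along any cycle is a perfect square. -/

/-- No loops. -/
def DiagLoopless {V : Type*} (w : V → V → ℕ) : Prop := ∀ i, w i i = 0

/-- Between any two vertices there is at most one directed edge. -/
def DiagOneDir {V : Type*} (w : V → V → ℕ) : Prop := ∀ i j, w i j = 0 ∨ w j i = 0

/-- The (undirected) weight of the edge between `i` and `j`. -/
def uw {V : Type*} (w : V → V → ℕ) (i j : V) : ℕ := w i j + w j i

/-- The product of the edge weights along any cycle (of length `≥ 3`) is a perfect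
square. -/
def CycleSquare {V : Type*} (w : V → V → ℕ) : Prop :=
  ∀ (m : ℕ) (v : Fin (m + 3) → V), Function.Injective v →
    (∀ t, uw w (v t) (v (t + 1)) ≠ 0) →
    ∃ s : ℕ, (∏ t : Fin (m + 3), uw w (v t) (v (t + 1))) = s ^ 2

/-- Fomin–Zelevinsky diagram mutation at the vertex `k`.  Edges incident to `k` are
reversed with their weights unchanged, and for every oriented two-edge path `i → k → j`
with weights `a`, `b`, the weight `c` of the edge between `i` and `j` is replaced by the
weight `c'` determined by `±√c ± √c' = √(ab)`, the sign before `√c` (resp. `√c'`) being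
`+` exactly when `i,j,k` form an oriented cycle in `Γ` (resp. in `μ_k(Γ)`). -/
def mutate {V : Type*} [DecidableEq V] (w : V → V → ℕ) (k : V) : V → V → ℕ :=
  fun i j =>
    if i = j then 0
    else if j = k then w k i
    else if i = k then w j k
    else if w i k ≠ 0 ∧ w k j ≠ 0 then
      -- oriented two-edge path `i → k → j`
      let a := w i k; let b := w k j; let c := w i j + w j i
      let s := Nat.sqrt (a * b * c)
      if w j i ≠ 0 then
        -- the triangle `i → k → j → i` is oriented in `Γ`: `c' = ab + c − 2√(abc)`,
        -- and the new edge goes from `i` to `j` exactly when `ab ≥ c`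
        (if c ≤ a * b then a * b + c - 2 * s else 0)
      else
        -- non-oriented (or no) triangle: `c' = ab + c + 2√(abc)`, new edge `i → j`
        a * b + c + 2 * s
    else if w j k ≠ 0 ∧ w k i ≠ 0 then
      -- oriented two-edge path `j → k → i`: the new edge goes from `j` to `i`
      -- unless the triangle was oriented in `Γ` with `ab < c`
      let a := w j k; let b := w k i; let c := w i j + w j i
      let s := Nat.sqrt (a * b * c)
      if w i j ≠ 0 ∧ a * b < c then a * b + c - 2 * s else 0
    else w i j

/-- Mutation equivalence of diagrams. -/
def MutEquiv {V : Type*} [DecidableEq V] (w w' : V → V → ℕ) : Prop :=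
  Relation.ReflTransGen (fun x y => ∃ k, y = mutate x k) w w'

/-- A diagram is 2-finite if every mutation-equivalent diagram has all edge weights in
`{1,2,3}`. -/
def TwoFinite {V : Type*} [DecidableEq V] (w : V → V → ℕ) : Prop :=
  ∀ w', MutEquiv w w' → ∀ i j, w' i j ≤ 3

/-- The subdiagram induced on a subset `S` of the vertices. -/
def restrictDiag {V : Type*} (w : V → V → ℕ) (S : Set V) : S → S → ℕ :=
  fun i j => w i j

/-- A diagram is minimal 2-infinite if it is 2-infinite and every proper induced
subdiagram is 2-finite. -/
def MinimalTwoInfinite {V : Type*} [DecidableEq V] (w : V → V → ℕ) : Prop :=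
  ¬ TwoFinite w ∧ ∀ S : Set V, S ≠ Set.univ → TwoFinite (restrictDiag w S)

/-- The underlying undirected graph of a diagram. -/
def toGraph {V : Type*} (w : V → V → ℕ) : SimpleGraph V where
  Adj i j := i ≠ j ∧ uw w i j ≠ 0
  symm := by
    constructor
    intro i j h
    refine ⟨h.1.symm, ?_⟩
    have h2 := h.2
    unfold uw at h2 ⊢
    omega
  loopless := by constructor; intro i h; exact h.1 rfl

/-- The mod-2 underlying graph of a diagram: `i ∼ j` iff the edge between them has odd
weight. -/
def toGraphMod2 {V : Type*} (w : V → V → ℕ) : SimpleGraph V where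
  Adj i j := i ≠ j ∧ Odd (uw w i j)
  symm := by
    constructor
    intro i j h
    refine ⟨h.1.symm, ?_⟩
    have h2 := h.2
    unfold uw at h2 ⊢
    rwa [Nat.add_comm]
  loopless := by constructor; intro i h; exact h.1 rfl

/-- The basic move `φ_{c,a}` on an undirected graph: the adjacency between `c` and each
neighbour `v ≠ c` of `a` is toggled, and all other edges are unchanged. -/
def basicMove {V : Type*} (G : SimpleGraph V) (c a : V) : SimpleGraph V where
  Adj u v := Xor' (G.Adj u v)
      ((u = c ∧ v ≠ c ∧ G.Adj a v) ∨ (v = c ∧ u ≠ c ∧ G.Adj a u))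
  symm := by
    constructor
    intro u v h
    show Xor' (G.Adj v u) _
    rw [G.adj_comm v u]
    unfold Xor' Xor at h ⊢
    tauto
  loopless := by
    constructor
    intro u h
    unfold Xor' Xor at h
    rcases h with ⟨h1, _⟩ | ⟨h1, _⟩
    · exact G.irrefl h1
    · rcases h1 with ⟨h2, h3, _⟩ | ⟨h2, h3, _⟩ <;> exact h3 h2

/-- One basic move applied to `G` (at a pair of adjacent vertices). -/
def BMStep {V : Type*} (G G' : SimpleGraph V) : Prop :=
  ∃ c a, G.Adj c a ∧ G' = basicMove G c a

/-- BM-equivalence: two graphs are related by a sequence of basic moves. -/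
def BMEquiv {V : Type*} (G G' : SimpleGraph V) : Prop :=
  Relation.ReflTransGen BMStep G G'

/-- The path (type `A_n`) graph on `n` vertices. -/
def dynA (n : ℕ) : SimpleGraph (Fin n) :=
  SimpleGraph.fromRel (fun i j => (i : ℕ) + 1 = (j : ℕ))

/-- The type `D_n` tree (`n ≥ 4`): a path `1 – 2 – ⋯ – (n−1)` with `0` attached to `2`. -/
def dynD (n : ℕ) : SimpleGraph (Fin n) :=
  SimpleGraph.fromRel (fun i j =>
    ((i : ℕ) = 0 ∧ (j : ℕ) = 2) ∨ ((i : ℕ) + 1 = (j : ℕ) ∧ 1 ≤ (i : ℕ)))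

/-- The type `E_n` tree (`n ∈ {6,7,8}`): a path `0 – 1 – ⋯ – (n−2)` with `n−1` attached
to `2`. -/
def dynE (n : ℕ) : SimpleGraph (Fin n) :=
  SimpleGraph.fromRel (fun i j =>
    ((i : ℕ) + 1 = (j : ℕ) ∧ (j : ℕ) ≤ n - 2) ∨ ((i : ℕ) = 2 ∧ (j : ℕ) = n - 1))

/-- `G` is (isomorphic to) a simply-laced Dynkin graph: type `A`, `D` or `E`. -/
def IsDynkinADE {V : Type*} (G : SimpleGraph V) : Prop :=
  (∃ n, 1 ≤ n ∧ Nonempty (G ≃g dynA n)) ∨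
  (∃ n, 4 ≤ n ∧ Nonempty (G ≃g dynD n)) ∨
  (∃ n, (n = 6 ∨ n = 7 ∨ n = 8) ∧ Nonempty (G ≃g dynE n))

/-- `v` enumerates an induced cycle (of length `m + 3`) in the diagram `w`. -/
def InducedCycleOn {V : Type*} (w : V → V → ℕ) {m : ℕ} (v : Fin (m + 3) → V) : Prop :=
  Function.Injective v ∧
    ∀ s t : Fin (m + 3), s ≠ t → (uw w (v s) (v t) ≠ 0 ↔ (t = s + 1 ∨ s = t + 1))

/-- The diagram contains a non-oriented (induced) cycle as a subdiagram. -/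
def HasNonorientedCycle {V : Type*} (w : V → V → ℕ) : Prop :=
  ∃ (m : ℕ) (v : Fin (m + 3) → V), InducedCycleOn w v ∧
    ¬ ((∀ t, w (v t) (v (t + 1)) ≠ 0) ∨ (∀ t, w (v (t + 1)) (v t) ≠ 0))


lemma xor'_assoc (a b c : Prop) : Xor' (Xor' a b) c ↔ Xor' a (Xor' b c) := by
  unfold Xor' Xor; tauto

lemma xor'_left_comm (a b c : Prop) : Xor' a (Xor' b c) ↔ Xor' b (Xor' a c) := by
  unfold Xor' Xor; tauto

lemma xor'_false_right (a : Prop) : Xor' a False ↔ a := by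
  unfold Xor' Xor; tauto

lemma xor'_false_left (a : Prop) : Xor' False a ↔ a := by
  unfold Xor' Xor; tauto

lemma xor'_comm (a b : Prop) : Xor' a b = Xor' b a := by
  unfold Xor'; exact _root_.xor_comm a b

lemma fold_adj {V : Type*} (k : V) (P : V → Prop) :
    ∀ (L : List V), L.Nodup → (∀ c ∈ L, c ≠ k) →
      ∀ (G : SimpleGraph V), (∀ x, G.Adj k x ↔ P x) → ∀ u v,
      ((L.foldl (fun G c => basicMove G c k) G).Adj u v ↔
        Xor' (G.Adj u v) (Xor' (u ∈ L ∧ v ≠ u ∧ P v) (v ∈ L ∧ u ≠ v ∧ P u))) := by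
  intro L
  induction L with
  | nil => intro _ _ G hG u v; simp [Xor', Xor]
  | cons c L ih =>
    intro hnd hne G hG u v
    have hcL : c ∉ L := (List.nodup_cons.mp hnd).1
    have hck : c ≠ k := hne c List.mem_cons_self
    have hG' : ∀ x, (basicMove G c k).Adj k x ↔ P x := by
      intro x
      have h0 : (basicMove G c k).Adj k x ↔ Xor' (G.Adj k x)
          ((k = c ∧ x ≠ c ∧ G.Adj k x) ∨ (x = c ∧ k ≠ c ∧ G.Adj k k)) := Iff.rfl
      rw [h0, ← hG x]
      have h1 : ¬ (k = c) := fun h => hck h.symm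
      have h2 : ¬ G.Adj k k := G.irrefl
      unfold Xor' Xor
      tauto
    simp only [List.foldl_cons]
    rw [ih (List.nodup_cons.mp hnd).2 (fun d hd => hne d (List.mem_cons_of_mem _ hd))
      (basicMove G c k) hG' u v]
    have hbm : (basicMove G c k).Adj u v ↔ Xor' (G.Adj u v)
        ((u = c ∧ v ≠ c ∧ P v) ∨ (v = c ∧ u ≠ c ∧ P u)) := by
      have h0 : (basicMove G c k).Adj u v ↔ Xor' (G.Adj u v)
          ((u = c ∧ v ≠ c ∧ G.Adj k v) ∨ (v = c ∧ u ≠ c ∧ G.Adj k u)) := Iff.rfl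
      rw [h0, hG v, hG u]
    rw [hbm]
    simp only [List.mem_cons]
    clear ih hG hG' hnd hne hbm
    rcases eq_or_ne u c with rfl | huc
    · have huL : ¬ (u ∈ L) := hcL
      clear hcL
      rcases eq_or_ne v u with rfl | hvu
      · simp [_root_.xor_comm, xor'_false_left]
      · have h2 : ¬ (u = v) := fun h => hvu h.symm
        simp [huL, hvu, h2, xor'_assoc, xor'_false_left]
    · rcases eq_or_ne v c with rfl | hvc
      · have hvL : ¬ (v ∈ L) := hcL
        clear hcL
        rcases eq_or_ne u v with rfl | huv
        · simp [_root_.xor_comm, xor'_false_left]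
        · have h2 : ¬ (v = u) := fun h => huv h.symm
          simp [hvL, huv, h2, xor'_assoc, xor'_left_comm, xor'_false_right, xor'_comm, xor'_false_left]
      · simp [huc, hvc, xor'_false_right]

lemma mutate_adj {V : Type*} [DecidableEq V] (w : V → V → ℕ) (k : V)
    (hloop : DiagLoopless w) (hdir : DiagOneDir w)
    (hsl : ∀ i j, w i j ≤ 1) (hsl' : ∀ i j, mutate w k i j ≤ 1) (u v : V) :
    (toGraph (mutate w k)).Adj u v ↔
      Xor' ((toGraph w).Adj u v)
        (Xor' (w u k ≠ 0 ∧ v ≠ u ∧ (toGraph w).Adj k v)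
              (w v k ≠ 0 ∧ u ≠ v ∧ (toGraph w).Adj k u)) := by
  have eM : ∀ i j : V, (toGraph (mutate w k)).Adj i j ↔
      (i ≠ j ∧ mutate w k i j + mutate w k j i ≠ 0) := fun _ _ => Iff.rfl
  have eA : ∀ i j : V, (toGraph w).Adj i j ↔ (i ≠ j ∧ w i j + w j i ≠ 0) :=
    fun _ _ => Iff.rfl
  rcases eq_or_ne u v with rfl | huv
  · simp [eM, eA, Xor']
  · have hvu : v ≠ u := fun h => huv h.symm
    rcases eq_or_ne u k with rfl | huk
    · have m1 : mutate w u u v = w v u := by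
        simp [mutate, hvu, huv]
      have m2 : mutate w u v u = w u v := by
        simp [mutate, hvu, huv]
      simp only [eM, eA, m1, m2]
      have h0 := hloop u
      simp [huv, hvu, h0, Xor', Xor]
      tauto
    · rcases eq_or_ne v k with rfl | hvk
      · have m1 : mutate w v u v = w v u := by
          simp [mutate, huv, hvu]
        have m2 : mutate w v v u = w u v := by
          simp [mutate, huv, hvu]
        simp only [eM, eA, m1, m2]
        have h0 := hloop v
        simp [huv, hvu, h0, Xor', Xor]
        tauto
      · have hku : k ≠ u := fun h => huk h.symm
        have hkv : k ≠ v := fun h => hvk h.symm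
        have d1 := hdir u k
        have d2 := hdir v k
        have d3 := hdir u v
        have s1 := hsl' u v
        have s2 := hsl' v u
        simp only [eM, eA]
        simp only [mutate, if_neg huv, if_neg hvu, if_neg huk, if_neg hvk] at s1 s2 ⊢
        have c1 : w u k = 0 ∨ w u k = 1 := by have := hsl u k; omega
        have c2 : w k u = 0 ∨ w k u = 1 := by have := hsl k u; omega
        have c3 : w v k = 0 ∨ w v k = 1 := by have := hsl v k; omega
        have c4 : w k v = 0 ∨ w k v = 1 := by have := hsl k v; omega
        have c5 : w u v = 0 ∨ w u v = 1 := by have := hsl u v; omega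
        have c6 : w v u = 0 ∨ w v u = 1 := by have := hsl v u; omega
        rcases c1 with hp | hp <;> rcases c2 with hq | hq <;>
          rcases c3 with hr | hr <;> rcases c4 with ht | ht <;>
          rcases c5 with hc | hc <;> rcases c6 with hd | hd <;>
          simp only [hp, hq, hr, ht, hc, hd] at s1 s2 d1 d2 d3 ⊢ <;>
          first
            | omega
            | (norm_num at s1 s2 ⊢ <;>
               simp_all [Xor', Xor, huv, hvu, huk, hku, hvk, hkv])
            | (norm_num at s1; done)
            | (norm_num at s2; done)

/-- If `Γ` and `Γ' = μ_k(Γ)` are simply-laced diagrams, then the underlying graph of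
`μ_k(Γ)` is obtained from the underlying graph of `Γ` by the sequence of basic moves
`φ_{c_r,k} ∘ ⋯ ∘ φ_{c₁,k}`, where `c₁, …, c_r` are the vertices with a (weight-1)
directed edge pointing toward `k`. -/
theorem stmt11 {V : Type*} [DecidableEq V] (w : V → V → ℕ) (k : V)
    (hloop : DiagLoopless w) (hdir : DiagOneDir w) (hsq : CycleSquare w)
    (hsl : ∀ i j, w i j ≤ 1) (hsl' : ∀ i j, mutate w k i j ≤ 1)
    (L : List V) (hnodup : L.Nodup) (hmem : ∀ c, c ∈ L ↔ w c k ≠ 0) :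
    toGraph (mutate w k) = L.foldl (fun G c => basicMove G c k) (toGraph w) := by
  have hk : ∀ c ∈ L, c ≠ k := by
    intro c hc h
    subst h
    exact ((hmem c).mp hc) (hloop c)
  ext u v
  rw [mutate_adj w k hloop hdir hsl hsl' u v,
    fold_adj k (fun x => (toGraph w).Adj k x) L hnodup hk (toGraph w)
      (fun x => Iff.rfl) u v]
  simp only [hmem]
end

section
/- Let Γ be a diagram, k a vertex of Γ, and suppose that in Γ no edge incident to k points toward k with odd weight — equivalently, every vertex adjacent to k via an odd-weight edge has that edge directed away from k. Then the underlying mod-2 graphs of Γ and μ_k(Γ) coincide (where the mod-2 graph joins i and j iff they are joined in the diagram by an edge of odd weight). -/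
open Finset

lemma two_sqrt_le (x c : ℕ) : 2 * Nat.sqrt (x * c) ≤ x + c := by
  have h := Nat.sqrt_le' (x * c)
  by_contra hlt
  push_neg at hlt
  zify at h hlt
  nlinarith [h, hlt, sq_nonneg ((x:ℤ) - c)]

lemma mut_pair {V : Type*} [DecidableEq V] (w : V → V → ℕ) (k : V)
    (hdir : DiagOneDir w) (hk : ∀ c, ¬ Odd (w c k))
    {i j : V} (hij : i ≠ j) (hik : i ≠ k) (hjk : j ≠ k)
    (hP : w i k ≠ 0 ∧ w k j ≠ 0) :
    (mutate w k i j + mutate w k j i) % 2 = (w i j + w j i) % 2 := by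
  have hki : w k i = 0 := (hdir i k).resolve_left hP.1
  have hQ : ¬ (w j k ≠ 0 ∧ w k i ≠ 0) := by simp [hki]
  have hpe : (w i k * w k j) % 2 = 0 :=
    Nat.even_iff.mp (Even.mul_right (Nat.not_odd_iff_even.mp (hk i)) _)
  have hb := two_sqrt_le (w i k * w k j) (w i j + w j i)
  simp only [mutate, if_neg hij, if_neg (Ne.symm hij), if_neg hik, if_neg hjk,
    if_pos hP, if_neg hQ]
  simp only [Nat.add_comm (w j i) (w i j)]
  generalize hgs : Nat.sqrt (w i k * w k j * (w i j + w j i)) = s at *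
  generalize hgp : w i k * w k j = p at hpe hb ⊢
  split_ifs <;> omega

lemma mut_parity {V : Type*} [DecidableEq V] (w : V → V → ℕ) (k : V)
    (hdir : DiagOneDir w) (hk : ∀ c, ¬ Odd (w c k))
    {i j : V} (hij : i ≠ j) :
    uw (mutate w k) i j % 2 = uw w i j % 2 := by
  unfold uw
  by_cases hjk : j = k
  · subst hjk
    have hik : i ≠ j := hij
    simp only [mutate, if_neg hij, if_pos rfl, if_neg (Ne.symm hij), if_true]
    omega
  · by_cases hik : i = k
    · subst hik
      simp only [mutate, if_neg hij, if_neg (Ne.symm hij), if_neg hjk, if_pos rfl, if_true]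
      omega
    · by_cases hP : w i k ≠ 0 ∧ w k j ≠ 0
      · exact mut_pair w k hdir hk hij hik hjk hP
      · by_cases hQ : w j k ≠ 0 ∧ w k i ≠ 0
        · have := mut_pair w k hdir hk (Ne.symm hij) hjk hik hQ
          omega
        · simp only [mutate, if_neg hij, if_neg (Ne.symm hij), if_neg hik, if_neg hjk,
            if_neg hP, if_neg hQ]

/-- If no edge incident to `k` points toward `k` with odd weight, then the mod-2
underlying graphs of `Γ` and of `μ_k(Γ)` coincide. -/
theorem stmt19 {V : Type*} [DecidableEq V] (w : V → V → ℕ) (k : V)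
    (hloop : DiagLoopless w) (hdir : DiagOneDir w) (hsq : CycleSquare w)
    (hk : ∀ c, ¬ Odd (w c k)) :
    toGraphMod2 (mutate w k) = toGraphMod2 w := by
  ext i j
  show i ≠ j ∧ Odd (uw (mutate w k) i j) ↔ i ≠ j ∧ Odd (uw w i j)
  by_cases hij : i = j
  · simp [hij]
  · have h := mut_parity w k hdir hk hij
    simp only [Nat.odd_iff, h]
end
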